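/- arXiv:1909.10484 — 5 statements merged into one kernel-verified Lean document; each statement's English description precedes it below -/
import Mathlib

section
/- The convex weight is convex: for devices D and E in a convex compact set of devices with convex free subset F, and p ∈ [0,1], W_F(pD + (1-p)E) ≤ p·W_F(D) + (1-p)·W_F(E). -/
/-- The convex weight of a device `D` with respect to the free subset `F`
of the set of devices `Dev`. -/
noncomputable def convexWeight {V : Type*} [AddCommGroup V] [Module ℝ V]
    (Dev F : Set V) (D : V) : ℝ :=
  sInf {l : ℝ | l ∈ Set.Icc (0 : ℝ) 1 ∧
    ∃ DF ∈ F, ∃ Dt ∈ Dev, D = (1 - l) • DF + l • Dt}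

lemma convexWeight_set_nonempty {V : Type*} [AddCommGroup V] [Module ℝ V]
    (Dev F : Set V) (hFne : F.Nonempty) {D : V} (hD : D ∈ Dev) :
    {l : ℝ | l ∈ Set.Icc (0 : ℝ) 1 ∧
      ∃ DF ∈ F, ∃ Dt ∈ Dev, D = (1 - l) • DF + l • Dt}.Nonempty := by
  obtain ⟨DF, hDF⟩ := hFne
  exact ⟨1, ⟨by norm_num, by norm_num⟩, DF, hDF, D, hD, by simp⟩

lemma convexWeight_combine {V : Type*} [AddCommGroup V] [Module ℝ V]
    (Dev F : Set V) (hDev : Convex ℝ Dev) (hF : Convex ℝ F) (hFsub : F ⊆ Dev)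
    (hFne : F.Nonempty) {D E : V} (hD : D ∈ Dev) (hE : E ∈ Dev)
    {p : ℝ} (hp : p ∈ Set.Icc (0 : ℝ) 1) {l m : ℝ}
    (hl : l ∈ {l : ℝ | l ∈ Set.Icc (0 : ℝ) 1 ∧
      ∃ DF ∈ F, ∃ Dt ∈ Dev, D = (1 - l) • DF + l • Dt})
    (hm : m ∈ {l : ℝ | l ∈ Set.Icc (0 : ℝ) 1 ∧
      ∃ DF ∈ F, ∃ Dt ∈ Dev, E = (1 - l) • DF + l • Dt}) :
    p * l + (1 - p) * m ∈ {l : ℝ | l ∈ Set.Icc (0 : ℝ) 1 ∧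
      ∃ DF ∈ F, ∃ Dt ∈ Dev, p • D + (1 - p) • E = (1 - l) • DF + l • Dt} := by
  obtain ⟨⟨hl0, hl1⟩, DF, hDF, Dt, hDt, hDeq⟩ := hl
  obtain ⟨⟨hm0, hm1⟩, EF, hEF, Et, hEt, hEeq⟩ := hm
  obtain ⟨hp0, hp1⟩ := hp
  set r := p * l + (1 - p) * m with hr
  have hr0 : 0 ≤ r := by nlinarith [mul_nonneg hp0 hl0, mul_nonneg (by linarith : (0:ℝ) ≤ 1 - p) hm0]
  have hr1 : r ≤ 1 := by nlinarith
  have hmem : r ∈ Set.Icc (0 : ℝ) 1 := ⟨hr0, hr1⟩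
  rcases eq_or_lt_of_le hr0 with h0 | h0
  · -- r = 0 : p*l = 0 and (1-p)*m = 0
    have hpl : p * l = 0 := by nlinarith [mul_nonneg hp0 hl0, mul_nonneg (by linarith : (0:ℝ) ≤ 1 - p) hm0]
    have hpm : (1 - p) * m = 0 := by nlinarith [mul_nonneg hp0 hl0, mul_nonneg (by linarith : (0:ℝ) ≤ 1 - p) hm0]
    have hre : r = 0 := h0.symm
    refine ⟨hmem, p • DF + (1 - p) • EF, hF hDF hEF hp0 (by linarith) (by ring), D, hD, ?_⟩
    rw [hre, hDeq, hEeq]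
    match_scalars <;>
      first | ring1 | linear_combination hpl | linear_combination -hpl | linear_combination hpm | linear_combination -hpm
  rcases eq_or_lt_of_le hr1 with h1 | h1
  · -- r = 1 : p*(1-l) = 0 and (1-p)*(1-m) = 0
    have hpl : p * (1 - l) = 0 := by nlinarith [mul_nonneg hp0 (by linarith : (0:ℝ) ≤ 1 - l), mul_nonneg (by linarith : (0:ℝ) ≤ 1 - p) (by linarith : (0:ℝ) ≤ 1 - m)]
    have hpm : (1 - p) * (1 - m) = 0 := by nlinarith [mul_nonneg hp0 (by linarith : (0:ℝ) ≤ 1 - l), mul_nonneg (by linarith : (0:ℝ) ≤ 1 - p) (by linarith : (0:ℝ) ≤ 1 - m)]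
    obtain ⟨X, hX⟩ := hFne
    refine ⟨hmem, X, hX, p • Dt + (1 - p) • Et, hDev hDt hEt hp0 (by linarith) (by ring), ?_⟩
    rw [h1, hDeq, hEeq]
    match_scalars <;>
      first | ring1 | linear_combination hpl | linear_combination -hpl | linear_combination hpm | linear_combination -hpm
  · -- 0 < r < 1
    have hr0' : (0:ℝ) < r := h0
    have hr1' : r < 1 := h1
    have hne : (1:ℝ) - r ≠ 0 := by linarith
    have hrne : r ≠ 0 := ne_of_gt h0
    have hsum : p * (1 - l) + (1 - p) * (1 - m) = 1 - r := by ring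
    refine ⟨hmem,
      (p * (1 - l) / (1 - r)) • DF + ((1 - p) * (1 - m) / (1 - r)) • EF,
      hF hDF hEF (div_nonneg (mul_nonneg hp0 (by linarith)) (by linarith)) (div_nonneg (mul_nonneg (by linarith) (by linarith)) (by linarith)) (by field_simp; linarith),
      (p * l / r) • Dt + ((1 - p) * m / r) • Et,
      hDev hDt hEt (div_nonneg (mul_nonneg hp0 hl0) hr0) (div_nonneg (mul_nonneg (by linarith) hm0) hr0) (by field_simp; exact hr.symm),
      ?_⟩
    rw [hDeq, hEeq]
    match_scalars <;> field_simp <;> ring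

/-- The convex weight is convex. -/
theorem convexWeight_convex {V : Type*} [NormedAddCommGroup V] [NormedSpace ℝ V]
    (Dev F : Set V) (hDev : Convex ℝ Dev) (hDevC : IsCompact Dev)
    (hF : Convex ℝ F) (hFC : IsCompact F) (hFsub : F ⊆ Dev) (hFne : F.Nonempty)
    (D E : V) (hD : D ∈ Dev) (hE : E ∈ Dev) (p : ℝ) (hp : p ∈ Set.Icc (0 : ℝ) 1) :
    convexWeight Dev F (p • D + (1 - p) • E)
      ≤ p * convexWeight Dev F D + (1 - p) * convexWeight Dev F E := by
  obtain ⟨hp0, hp1⟩ := hp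
  refine le_of_forall_pos_le_add fun ε hε => ?_
  simp only [convexWeight]
  obtain ⟨l, hl, hlt⟩ := Real.lt_sInf_add_pos
    (convexWeight_set_nonempty Dev F hFne hD) (half_pos hε)
  obtain ⟨m, hm, hmt⟩ := Real.lt_sInf_add_pos
    (convexWeight_set_nonempty Dev F hFne hE) (half_pos hε)
  have hbdd : BddBelow {l : ℝ | l ∈ Set.Icc (0 : ℝ) 1 ∧
      ∃ DF ∈ F, ∃ Dt ∈ Dev, p • D + (1 - p) • E = (1 - l) • DF + l • Dt} :=
    ⟨0, fun x hx => hx.1.1⟩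
  have := csInf_le hbdd
    (convexWeight_combine Dev F hDev hF hFsub hFne hD hE ⟨hp0, hp1⟩ hl hm)
  refine le_trans this ?_
  calc p * l + (1 - p) * m
    _ ≤ p * convexWeight Dev F D + (1 - p) * convexWeight Dev F E + ε := by
        simp only [convexWeight]
        nlinarith [mul_le_mul_of_nonneg_left hlt.le hp0,
          mul_le_mul_of_nonneg_left hmt.le (by linarith : (0:ℝ) ≤ 1 - p), hε.le]
end

section
/- If the infimum over all 'games' (linear functionals P nonnegative on Dev, not identically zero on F) of the ratio P(D)/min_{Γ∈F}P(Γ) is considered (restricted to games where min_{Γ∈F}P(Γ) > 0), then this infimum is at least 1 - W_F(D). -/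
/-- For every game (a linear functional nonnegative on `Dev` whose minimum over `F`
is strictly positive), the payoff ratio is at least `1 - W_F(D)`; hence so is the
infimum of the ratios over all games. -/
theorem game_ratio_lower_bound {V : Type*} [NormedAddCommGroup V] [NormedSpace ℝ V]
    [FiniteDimensional ℝ V]
    (Dev F : Set V) (hDev : Convex ℝ Dev) (hDevC : IsCompact Dev)
    (hF : Convex ℝ F) (hFC : IsCompact F) (hFsub : F ⊆ Dev) (hFne : F.Nonempty)
    (D : V) (hD : D ∈ Dev) :
    ∀ P : V →ₗ[ℝ] ℝ, (∀ E ∈ Dev, 0 ≤ P E) → 0 < sInf (P '' F) →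
      1 - convexWeight Dev F D ≤ P D / sInf (P '' F) := by
  intro P hP hm
  set m := sInf (P '' F) with hmdef
  obtain ⟨E0, hE0⟩ := hFne
  have hSne : ∃ l, l ∈ {l : ℝ | l ∈ Set.Icc (0 : ℝ) 1 ∧
      ∃ DF ∈ F, ∃ Dt ∈ Dev, D = (1 - l) • DF + l • Dt} := by
    refine ⟨1, ⟨by norm_num, E0, hE0, D, hD, by simp⟩⟩
  have hbdd : BddBelow (P '' F) :=
    ((hFC.image P.continuous_of_finiteDimensional).isBounded).bddBelow
  have key : 1 - P D / m ≤ convexWeight Dev F D := by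
    refine le_csInf hSne ?_
    rintro l ⟨⟨hl0, hl1⟩, DF, hDF, Dt, hDt, hDeq⟩
    have hPDF : m ≤ P DF := csInf_le hbdd ⟨DF, hDF, rfl⟩
    have hPDt : 0 ≤ P Dt := hP Dt hDt
    have hPD : (1 - l) * m ≤ P D := by
      have : P D = (1 - l) * P DF + l * P Dt := by
        rw [hDeq]; simp [mul_comm]
      rw [this]
      have h1 : (1 - l) * m ≤ (1 - l) * P DF :=
        mul_le_mul_of_nonneg_left hPDF (by linarith)
      nlinarith
    have : 1 - l ≤ P D / m := by
      rw [le_div_iff₀ hm]; linarith [hPD]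
    linarith
  linarith
end

section
/- Cone program primal formulation of the weight for a single POVM: for a POVM M = (M_i)_{i=1..n} on a d-dimensional Hilbert space and free convex cone C_F generated by a convex compact set F of POVMs, one has 1 - W_F(M) = max{(1/d)·Σ_i tr[O_i] : 0 ≤ O_i ≤ M_i for all i, (O_i) ∈ C_F}. -/
open Matrix
open scoped ComplexOrder

/-- A POVM with `n` outcomes on `ℂ^d`: positive semidefinite effects summing to the identity. -/
def IsPOVM {d n : ℕ} (M : Fin n → Matrix (Fin d) (Fin d) ℂ) : Prop :=
  (∀ i, (M i).PosSemidef) ∧ ∑ i, M i = 1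

/-- The convex weight of a POVM `M` with respect to a free set `F` of POVMs. -/
noncomputable def povmWeight {d n : ℕ} (F : Set (Fin n → Matrix (Fin d) (Fin d) ℂ))
    (M : Fin n → Matrix (Fin d) (Fin d) ℂ) : ℝ :=
  sInf {l : ℝ | l ∈ Set.Icc (0 : ℝ) 1 ∧
    ∃ N ∈ F, ∃ Mt, IsPOVM Mt ∧ M = (1 - l) • N + l • Mt}

/- ### Auxiliary lemmas -/

lemma complex_nonneg_isClosed : IsClosed {z : ℂ | 0 ≤ z} := by
  have : {z : ℂ | 0 ≤ z} = Complex.re ⁻¹' {r : ℝ | 0 ≤ r} ∩ Complex.im ⁻¹' {0} := by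
    ext z
    simp only [Set.mem_setOf_eq, Set.mem_inter_iff, Set.mem_preimage, Set.mem_singleton_iff,
      Complex.nonneg_iff]
    exact ⟨fun h => ⟨h.1, h.2.symm⟩, fun h => ⟨h.1, h.2.symm⟩⟩
  rw [this]
  exact (isClosed_Ici.preimage Complex.continuous_re).inter
    (isClosed_singleton.preimage Complex.continuous_im)

lemma psd_isClosed {d : ℕ} : IsClosed {A : Matrix (Fin d) (Fin d) ℂ | A.PosSemidef} := by
  have heq : {A : Matrix (Fin d) (Fin d) ℂ | A.PosSemidef}
      = {A : Matrix (Fin d) (Fin d) ℂ | Aᴴ = A}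
        ∩ ⋂ x : Fin d → ℂ, {A | (0 : ℂ) ≤ star x ⬝ᵥ A *ᵥ x} := by
    ext A
    simp only [Set.mem_setOf_eq, Set.mem_inter_iff, Set.mem_iInter,
      Matrix.posSemidef_iff_dotProduct_mulVec, Matrix.IsHermitian]
  rw [heq]
  refine IsClosed.inter (isClosed_eq continuous_id.matrix_conjTranspose continuous_id) ?_
  refine isClosed_iInter fun x => ?_
  have hc : Continuous fun A : Matrix (Fin d) (Fin d) ℂ => star x ⬝ᵥ A *ᵥ x :=
    continuous_const.dotProduct (continuous_id.matrix_mulVec continuous_const)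
  exact complex_nonneg_isClosed.preimage hc

lemma psd_smul {d : ℕ} {a : ℝ} (ha : 0 ≤ a) {A : Matrix (Fin d) (Fin d) ℂ}
    (hA : A.PosSemidef) : (a • A).PosSemidef := by
  refine Matrix.posSemidef_iff_dotProduct_mulVec.mpr ⟨?_, fun x => ?_⟩
  · unfold Matrix.IsHermitian
    rw [Matrix.conjTranspose_smul, star_trivial, hA.1]
  · have h1 : (a • A) *ᵥ x = a • (A *ᵥ x) := Matrix.smul_mulVec a A x
    rw [h1, dotProduct_smul]
    have : a • (star x ⬝ᵥ A *ᵥ x) = (a : ℂ) * (star x ⬝ᵥ A *ᵥ x) := Complex.real_smul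
    rw [this]
    exact mul_nonneg (Complex.zero_le_real.mpr ha) (hA.dotProduct_mulVec_nonneg x)

lemma psd_sum {d : ℕ} {ι : Type*} (s : Finset ι) (f : ι → Matrix (Fin d) (Fin d) ℂ)
    (h : ∀ i ∈ s, (f i).PosSemidef) : (∑ i ∈ s, f i).PosSemidef := by
  classical
  induction s using Finset.induction_on with
  | empty => simpa using Matrix.PosSemidef.zero
  | insert _ _ hx ih =>
    rw [Finset.sum_insert hx]
    exact (h _ (Finset.mem_insert_self _ _)).add
      (ih fun i hi => h i (Finset.mem_insert_of_mem hi))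

lemma psd_neg_eq_zero {d : ℕ} {A : Matrix (Fin d) (Fin d) ℂ}
    (hA : A.PosSemidef) (hA' : (-A).PosSemidef) : A = 0 := by
  have hzero : ∀ x : Fin d → ℂ, A *ᵥ x = 0 := by
    intro x
    have h1 : (0 : ℂ) ≤ star x ⬝ᵥ A *ᵥ x := hA.dotProduct_mulVec_nonneg x
    have h2 : (0 : ℂ) ≤ star x ⬝ᵥ (-A) *ᵥ x := hA'.dotProduct_mulVec_nonneg x
    rw [Matrix.neg_mulVec, dotProduct_neg] at h2
    have : star x ⬝ᵥ A *ᵥ x = 0 := le_antisymm (neg_nonneg.mp h2) h1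
    exact (hA.dotProduct_mulVec_zero_iff x).mp this
  ext i j
  have := congrFun (hzero (Pi.single j 1)) i
  rw [Matrix.mulVec_single] at this
  simpa using this

lemma psd_trace_nonneg {d : ℕ} {A : Matrix (Fin d) (Fin d) ℂ} (hA : A.PosSemidef) :
    (0 : ℂ) ≤ A.trace := by
  refine Finset.sum_nonneg fun i _ => ?_
  have h := hA.dotProduct_mulVec_nonneg (Pi.single i 1)
  rw [Matrix.mulVec_single] at h
  simpa [dotProduct, Pi.single_apply, Pi.star_apply, apply_ite, ite_mul,
    Matrix.diag] using h

/-- The total trace of the effects of a POVM is `d`. -/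
lemma povm_trace_sum {d n : ℕ} {T : Fin n → Matrix (Fin d) (Fin d) ℂ} (hT : IsPOVM T) :
    ∑ i, (T i).trace = (d : ℂ) := by
  rw [← Matrix.trace_sum, hT.2, Matrix.trace_one]
  simp

/-- Cone-program primal formulation of the convex weight of a POVM:
`1 - W_F(M)` is the maximum of `(1/d) Σ_i tr O_i` over operator tuples `O` with
`0 ≤ O_i ≤ M_i` lying in the cone generated by `F`. -/
theorem povmWeight_primal {d n : ℕ} [NeZero d] [NeZero n]
    (F : Set (Fin n → Matrix (Fin d) (Fin d) ℂ))
    (hFpovm : ∀ N ∈ F, IsPOVM N) (hFne : F.Nonempty) (hFconv : Convex ℝ F)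
    (hFcomp : IsCompact F)
    (M : Fin n → Matrix (Fin d) (Fin d) ℂ) (hM : IsPOVM M) :
    IsGreatest {r : ℝ | ∃ O : Fin n → Matrix (Fin d) (Fin d) ℂ,
        (∀ i, (O i).PosSemidef) ∧ (∀ i, (M i - O i).PosSemidef) ∧
        (∃ a : ℝ, 0 ≤ a ∧ ∃ T ∈ F, O = a • T) ∧
        r = (1 / (d : ℝ)) * (∑ i, (O i).trace).re}
      (1 - povmWeight F M) := by
  classical
  have hd0 : (0 : ℝ) < (d : ℝ) := by
    exact_mod_cast Nat.pos_of_ne_zero (NeZero.ne d)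
  -- the feasibility region
  set K : Set (ℝ × (Fin n → Matrix (Fin d) (Fin d) ℂ)) :=
    (Set.Icc (0:ℝ) 1 ×ˢ F) ∩ {p | ∀ i, (M i - p.1 • p.2 i).PosSemidef} with hKdef
  -- K is compact
  have hKclosed : IsClosed {p : ℝ × (Fin n → Matrix (Fin d) (Fin d) ℂ) |
      ∀ i, (M i - p.1 • p.2 i).PosSemidef} := by
    have : {p : ℝ × (Fin n → Matrix (Fin d) (Fin d) ℂ) | ∀ i, (M i - p.1 • p.2 i).PosSemidef}
        = ⋂ i, (fun p : ℝ × (Fin n → Matrix (Fin d) (Fin d) ℂ) => M i - p.1 • p.2 i) ⁻¹'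
            {A | A.PosSemidef} := by
      ext p; simp [Set.mem_iInter]
    rw [this]
    refine isClosed_iInter fun i => psd_isClosed.preimage ?_
    exact continuous_const.sub (continuous_fst.smul ((continuous_apply i).comp continuous_snd))
  have hKcomp : IsCompact K := ((isCompact_Icc.prod hFcomp).inter_right hKclosed)
  obtain ⟨N₀, hN₀⟩ := hFne
  have hKne : K.Nonempty := by
    refine ⟨(0, N₀), ⟨⟨le_refl _, zero_le_one⟩, hN₀⟩, fun i => ?_⟩
    simpa using (hM.1 i)
  -- the set of achievable weights
  have hPcomp : IsCompact (Prod.fst '' K) := hKcomp.image continuous_fst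
  have hPne : (Prod.fst '' K).Nonempty := hKne.image _
  obtain ⟨a, haK, hamax⟩ := hPcomp.exists_isGreatest hPne
  -- direction (i): a ∈ fst '' K → 1 - a ∈ S
  have hdirS : ∀ b ∈ Prod.fst '' K, (1 - b) ∈ {l : ℝ | l ∈ Set.Icc (0 : ℝ) 1 ∧
      ∃ N ∈ F, ∃ Mt, IsPOVM Mt ∧ M = (1 - l) • N + l • Mt} := by
    rintro b ⟨⟨b', T⟩, ⟨⟨hb01, hTF⟩, hpsd⟩, rfl⟩
    simp only at hpsd hb01 ⊢
    have hT := hFpovm T hTF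
    rcases eq_or_lt_of_le hb01.2 with hb1 | hb1
    · -- b = 1 : then M = T ∈ F
      subst hb1
      have hsum : ∑ i, (M i - (1:ℝ) • T i) = 0 := by
        simp only [one_smul]
        rw [Finset.sum_sub_distrib, hM.2, hT.2, sub_self]
      have hMT : M = T := by
        funext i
        have hneg : (-(M i - (1:ℝ) • T i)).PosSemidef := by
          have h2 : ∑ j ∈ Finset.univ.erase i, (M j - (1:ℝ) • T j) + (M i - (1:ℝ) • T i) = 0 := by
            rw [Finset.sum_erase_add _ _ (Finset.mem_univ i), hsum]
          have h3 : -(M i - (1:ℝ) • T i) = ∑ j ∈ Finset.univ.erase i, (M j - (1:ℝ) • T j) :=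
            neg_eq_of_add_eq_zero_left h2
          rw [h3]
          exact psd_sum _ _ fun j _ => hpsd j
        have h0 : M i - T i = 0 := by simpa using psd_neg_eq_zero (hpsd i) hneg
        exact sub_eq_zero.mp h0
      constructor
      · constructor <;> linarith [hb01.1]
      · exact ⟨T, hTF, M, hM, by rw [hMT]; simp⟩
    · -- b < 1
      constructor
      · constructor <;> linarith [hb01.1]
      refine ⟨T, hTF, fun i => (1 - b')⁻¹ • (M i - b' • T i), ⟨⟨fun i => ?_, ?_⟩, ?_⟩⟩
      · exact psd_smul (inv_nonneg.mpr (by linarith)) (hpsd i)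
      · have : ∑ i, (1 - b')⁻¹ • (M i - b' • T i)
            = (1 - b')⁻¹ • (∑ i, (M i - b' • T i)) := by
          rw [Finset.smul_sum]
        rw [this, Finset.sum_sub_distrib, hM.2, ← Finset.smul_sum, hT.2]
        have h1b : (1 : ℝ) - b' ≠ 0 := by linarith
        rw [show (1 : Matrix (Fin d) (Fin d) ℂ) - b' • 1 = ((1:ℝ) - b') • 1 by
          rw [sub_smul, one_smul], smul_smul, inv_mul_cancel₀ h1b, one_smul]
      · funext i
        have h1b : (1 : ℝ) - b' ≠ 0 := by linarith
        simp only [Pi.add_apply, Pi.smul_apply]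
        rw [show (1 : ℝ) - (1 - b') = b' by ring, smul_smul, mul_inv_cancel₀ h1b, one_smul]
        abel
  -- direction (ii): l ∈ S → 1 - l ∈ fst '' K
  have hdirK : ∀ l ∈ {l : ℝ | l ∈ Set.Icc (0 : ℝ) 1 ∧
      ∃ N ∈ F, ∃ Mt, IsPOVM Mt ∧ M = (1 - l) • N + l • Mt}, (1 - l) ∈ Prod.fst '' K := by
    rintro l ⟨hl01, N, hNF, Mt, hMt, hMdec⟩
    refine ⟨(1 - l, N), ⟨⟨⟨show (0:ℝ) ≤ 1 - l by linarith [hl01.2],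
      show (1:ℝ) - l ≤ 1 by linarith [hl01.1]⟩, hNF⟩, fun i => ?_⟩, rfl⟩
    have : M i - (1 - l) • N i = l • Mt i := by
      have := congrFun hMdec i
      simp only [Pi.add_apply, Pi.smul_apply] at this
      rw [this]; abel
    rw [this]
    exact psd_smul hl01.1 (hMt.1 i)
  -- the weight equals 1 - a
  have hW : povmWeight F M = 1 - a := by
    unfold povmWeight
    have hleast : IsLeast {l : ℝ | l ∈ Set.Icc (0 : ℝ) 1 ∧
        ∃ N ∈ F, ∃ Mt, IsPOVM Mt ∧ M = (1 - l) • N + l • Mt} (1 - a) := by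
      constructor
      · exact hdirS a haK
      · intro l hl
        have := hamax (hdirK l hl)
        linarith
    exact hleast.csInf_eq
  rw [hW, sub_sub_cancel]
  -- identify the target set with fst '' K
  have hset : {r : ℝ | ∃ O : Fin n → Matrix (Fin d) (Fin d) ℂ,
      (∀ i, (O i).PosSemidef) ∧ (∀ i, (M i - O i).PosSemidef) ∧
      (∃ a : ℝ, 0 ≤ a ∧ ∃ T ∈ F, O = a • T) ∧
      r = (1 / (d : ℝ)) * (∑ i, (O i).trace).re} = Prod.fst '' K := by
    ext r
    constructor
    · rintro ⟨O, hOpsd, hMOpsd, ⟨c, hc0, T, hTF, rfl⟩, hr⟩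
      have hT := hFpovm T hTF
      -- compute r = c
      have htr : ∑ i, ((c • T) i).trace = (c : ℂ) * (d : ℂ) := by
        simp only [Pi.smul_apply, Matrix.trace_smul]
        rw [← Finset.smul_sum, povm_trace_sum hT, Complex.real_smul]
      have hrc : r = c := by
        rw [hr, htr]
        have : ((c : ℂ) * (d : ℂ)).re = c * d := by
          norm_cast
        rw [this]
        field_simp
      -- c ≤ 1
      have hc1 : c ≤ 1 := by
        have hsum : (∑ i, (M i - (c • T) i)).PosSemidef :=
          psd_sum _ _ fun i _ => hMOpsd i
        have : ∑ i, (M i - (c • T) i) = (1 - c) • (1 : Matrix (Fin d) (Fin d) ℂ) := by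
          rw [Finset.sum_sub_distrib, hM.2]
          simp only [Pi.smul_apply]
          rw [← Finset.smul_sum, hT.2, sub_smul, one_smul]
        rw [this] at hsum
        have htr2 := psd_trace_nonneg hsum
        rw [Matrix.trace_smul, Matrix.trace_one] at htr2
        have : (0 : ℝ) ≤ (1 - c) * d := by
          have := htr2
          rw [show ((1:ℝ) - c) • (Fintype.card (Fin d) : ℂ) = (((1 - c) * d : ℝ) : ℂ) by
            rw [Complex.real_smul]; push_cast [Fintype.card_fin]; ring] at this
          exact Complex.zero_le_real.mp this
        nlinarith
      rw [hrc]
      exact ⟨(c, T), ⟨⟨⟨hc0, hc1⟩, hTF⟩, fun i => by simpa using hMOpsd i⟩, rfl⟩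
    · rintro ⟨⟨c, T⟩, ⟨⟨hc01, hTF⟩, hpsd⟩, rfl⟩
      simp only at hpsd hc01 ⊢
      have hT := hFpovm T hTF
      refine ⟨c • T, fun i => psd_smul hc01.1 (hT.1 i), fun i => by simpa using hpsd i,
        ⟨c, hc01.1, T, hTF, rfl⟩, ?_⟩
      have htr : ∑ i, ((c • T) i).trace = (c : ℂ) * (d : ℂ) := by
        simp only [Pi.smul_apply, Matrix.trace_smul]
        rw [← Finset.smul_sum, povm_trace_sum hT, Complex.real_smul]
      rw [htr]
      have : ((c : ℂ) * (d : ℂ)).re = c * d := by norm_cast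
      rw [this]
      field_simp
  rw [hset]
  exact ⟨haK, hamax⟩
end

section
/- Weight of a POVM with respect to trivial POVMs: for a POVM M = (M_i)_{i=1..n} on ℂ^d with each M_i > 0 invertible, the convex weight with respect to the set F of trivial POVMs {p(i)·1} satisfies 1 - W_F(M) = Σ_i λ_min(M_i), where λ_min(M_i) is the smallest eigenvalue of M_i. -/
open Matrix
open scoped ComplexOrder

lemma smul_posSemidef {d : ℕ} {r : ℝ} (hr : 0 ≤ r) {A : Matrix (Fin d) (Fin d) ℂ}
    (hA : A.PosSemidef) : (r • A).PosSemidef := by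
  refine posSemidef_iff_dotProduct_mulVec.mpr ⟨?_, ?_⟩
  · unfold Matrix.IsHermitian
    rw [conjTranspose_smul, hA.1.eq]
    norm_num
  · intro x
    have := hA.dotProduct_mulVec_nonneg x
    rw [Matrix.smul_mulVec, dotProduct_smul, RCLike.real_smul_eq_coe_mul]
    exact mul_nonneg (by rwa [RCLike.ofReal_nonneg]) this

lemma posSemidef_sub_smul_one_iff {d : ℕ} {A : Matrix (Fin d) (Fin d) ℂ}
    (hA : A.IsHermitian) (t : ℝ) :
    (A - t • 1).PosSemidef ↔ ∀ j, t ≤ hA.eigenvalues j := by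
  set U : Matrix (Fin d) (Fin d) ℂ := (hA.eigenvectorUnitary : Matrix (Fin d) (Fin d) ℂ) with hUdef
  have hU1 : U * star U = 1 := (Matrix.mem_unitaryGroup_iff).mp hA.eigenvectorUnitary.2
  have hU2 : star U * U = 1 := (Matrix.mem_unitaryGroup_iff').mp hA.eigenvectorUnitary.2
  set D : Matrix (Fin d) (Fin d) ℂ := diagonal (fun j => ((hA.eigenvalues j - t : ℝ) : ℂ)) with hD
  have key : A - t • 1 = U * D * star U := by
    have hd : D = diagonal (RCLike.ofReal ∘ hA.eigenvalues) - t • 1 := by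
      ext i j
      rcases eq_or_ne i j with rfl | hij
      · simp [hD, Matrix.one_apply, Complex.real_smul]
      · simp [hD, diagonal_apply_ne _ hij, Matrix.one_apply_ne hij]
    rw [hd, mul_sub, sub_mul, mul_smul_comm, smul_mul_assoc, mul_one, hU1]
    exact congrArg (· - t • (1 : Matrix (Fin d) (Fin d) ℂ)) hA.spectral_theorem
  have e : star U * (U * D * star U) * U = D := by
    simp only [← mul_assoc]
    rw [hU2, one_mul, mul_assoc, hU2, mul_one]
  constructor
  · intro h j
    have h2 : D.PosSemidef := by
      have := h.mul_mul_conjTranspose_same (star U)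
      rw [key, show (star U)ᴴ = U from star_star U, e] at this
      exact this
    have := posSemidef_diagonal_iff.mp h2 j
    rw [show ((hA.eigenvalues j - t : ℝ) : ℂ) = Complex.ofReal (hA.eigenvalues j - t) from rfl,
      Complex.zero_le_real] at this
    linarith
  · intro h
    rw [key]
    have h2 : D.PosSemidef := by
      refine posSemidef_diagonal_iff.mpr fun j => ?_
      rw [show ((hA.eigenvalues j - t : ℝ) : ℂ) = Complex.ofReal (hA.eigenvalues j - t) from rfl,
        Complex.zero_le_real]
      linarith [h j]
    have := h2.mul_mul_conjTranspose_same U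
    rwa [show Uᴴ = star U from rfl] at this

lemma nonneg_of_smul_one_posSemidef {d : ℕ} [NeZero d] {r : ℝ}
    (h : (r • (1 : Matrix (Fin d) (Fin d) ℂ)).PosSemidef) : 0 ≤ r := by
  have hd0 : 0 < d := Nat.pos_of_ne_zero (NeZero.ne d)
  have := h.dotProduct_mulVec_nonneg (Pi.single ⟨0, hd0⟩ 1)
  rw [Matrix.smul_mulVec, one_mulVec, dotProduct_smul, RCLike.real_smul_eq_coe_mul] at this
  simp only [dotProduct_single, Pi.star_apply, Pi.single_eq_same, star_one, mul_one] at this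
  rwa [← Complex.zero_le_real]

/-- The set of trivial POVMs `O_i = p(i)·𝟙`. -/
def TrivialPOVMs (d n : ℕ) : Set (Fin n → Matrix (Fin d) (Fin d) ℂ) :=
  {O | ∃ p : Fin n → ℝ, (∀ i, 0 ≤ p i) ∧ ∑ i, p i = 1 ∧
    O = fun i => (p i) • (1 : Matrix (Fin d) (Fin d) ℂ)}

/-- The convex weight of a POVM with positive definite effects with respect to
trivial POVMs: `1 - W_F(M) = Σ_i λ_min(M_i)`. -/
theorem povmWeight_trivial {d n : ℕ} [NeZero d] [NeZero n]
    (M : Fin n → Matrix (Fin d) (Fin d) ℂ) (hM : IsPOVM M)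
    (hpos : ∀ i, (M i).PosDef) :
    1 - povmWeight (TrivialPOVMs d n) M = ∑ i, ⨅ j, (hpos i).1.eigenvalues j := by
  classical
  have hd0 : 0 < d := Nat.pos_of_ne_zero (NeZero.ne d)
  have hne : Nonempty (Fin d) := ⟨⟨0, hd0⟩⟩
  set c : Fin n → ℝ := fun i => ⨅ j, (hpos i).1.eigenvalues j with hc
  set S : ℝ := ∑ i, c i with hSdef
  have hc_le : ∀ i j, c i ≤ (hpos i).1.eigenvalues j := fun i j =>
    ciInf_le (Set.Finite.bddBelow (Set.finite_range _)) j
  have hcpos : ∀ i, 0 < c i := by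
    intro i
    obtain ⟨j0, hj0⟩ := Finite.exists_min ((hpos i).1.eigenvalues)
    have hceq : c i = (hpos i).1.eigenvalues j0 := le_antisymm (hc_le i j0) (le_ciInf hj0)
    rw [hceq]
    exact (hpos i).eigenvalues_pos j0
  have hMc : ∀ i, (M i - c i • 1).PosSemidef := fun i =>
    (posSemidef_sub_smul_one_iff (hpos i).1 (c i)).mpr (hc_le i)
  have hS1 : S ≤ 1 := by
    have hsum : ∑ i, (M i - c i • 1) = (1 - S) • (1 : Matrix (Fin d) (Fin d) ℂ) := by
      rw [Finset.sum_sub_distrib, hM.2, ← Finset.sum_smul, sub_smul, one_smul]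
    have hPSD : ((1 - S) • (1 : Matrix (Fin d) (Fin d) ℂ)).PosSemidef := by
      rw [← hsum]
      exact Finset.sum_induction _ _ (fun a b ha hb => ha.add hb) Matrix.PosSemidef.zero
        (fun i _ => hMc i)
    linarith [nonneg_of_smul_one_posSemidef hPSD]
  have hSpos : 0 < S := Finset.sum_pos (fun i _ => hcpos i) Finset.univ_nonempty
  set T : Set ℝ := {l : ℝ | l ∈ Set.Icc (0 : ℝ) 1 ∧
    ∃ N ∈ TrivialPOVMs d n, ∃ Mt, IsPOVM Mt ∧ M = (1 - l) • N + l • Mt} with hT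
  have hmem : ∀ k : ℝ, 1 - S < k → k ≤ 1 → k ∈ T := by
    intro k hk1 hk2
    have hk0 : 0 < k := by linarith
    refine ⟨⟨hk0.le, hk2⟩, fun i => (c i / S) • 1,
      ⟨fun i => c i / S, fun i => div_nonneg (hcpos i).le hSpos.le, ?_, rfl⟩,
      fun i => k⁻¹ • (M i - ((1 - k) * (c i / S)) • 1), ⟨?_, ?_⟩, ?_⟩
    · rw [← Finset.sum_div, ← hSdef, div_self hSpos.ne']
    · intro i
      refine smul_posSemidef (inv_nonneg.mpr hk0.le) ?_
      refine (posSemidef_sub_smul_one_iff (hpos i).1 _).mpr fun j => le_trans ?_ (hc_le i j)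
      have h1 : (1 - k) * (c i / S) ≤ S * (c i / S) :=
        mul_le_mul_of_nonneg_right (by linarith) (div_nonneg (hcpos i).le hSpos.le)
      have h2 : S * (c i / S) = c i := by
        rw [mul_comm, div_mul_cancel₀ _ hSpos.ne']
      linarith
    · rw [← Finset.smul_sum, Finset.sum_sub_distrib, hM.2, ← Finset.sum_smul]
      have h3 : ∑ i, (1 - k) * (c i / S) = 1 - k := by
        rw [← Finset.mul_sum, ← Finset.sum_div, ← hSdef, div_self hSpos.ne', mul_one]
      rw [h3, sub_smul, one_smul, sub_sub_cancel, smul_smul, inv_mul_cancel₀ hk0.ne', one_smul]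
    · funext i
      show M i = (1 - k) • ((c i / S) • 1) + k • (k⁻¹ • (M i - ((1 - k) * (c i / S)) • 1))
      rw [smul_smul, smul_smul, mul_inv_cancel₀ hk0.ne', one_smul]
      abel
  have hlb : ∀ l ∈ T, 1 - S ≤ l := by
    rintro l ⟨⟨hl0, hl1⟩, N, ⟨p, hp0, hp1, rfl⟩, Mt, hMt, hMeq⟩
    have h1 : ∀ i, (1 - l) * p i ≤ c i := by
      intro i
      have heq : M i - ((1 - l) * p i) • 1 = l • Mt i := by
        have hi := congrFun hMeq i
        simp only [Pi.add_apply, Pi.smul_apply] at hi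
        rw [hi, smul_smul, add_sub_cancel_left]
      have hpsd : (M i - ((1 - l) * p i) • 1).PosSemidef := by
        rw [heq]
        exact smul_posSemidef hl0 (hMt.1 i)
      exact le_ciInf fun j => (posSemidef_sub_smul_one_iff (hpos i).1 _).mp hpsd j
    have h2 : 1 - l ≤ S := by
      calc 1 - l = ∑ i, (1 - l) * p i := by rw [← Finset.mul_sum, hp1, mul_one]
      _ ≤ ∑ i, c i := Finset.sum_le_sum fun i _ => h1 i
      _ = S := hSdef.symm
    linarith
  have hW : povmWeight (TrivialPOVMs d n) M = 1 - S := by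
    show sInf T = 1 - S
    refine csInf_eq_of_forall_ge_of_forall_gt_exists_lt
      ⟨1, hmem 1 (by linarith) le_rfl⟩ hlb ?_
    intro w hw
    refine ⟨min 1 ((1 - S + w) / 2), hmem _ (lt_min (by linarith) (by linarith))
      (min_le_left _ _), lt_of_le_of_lt (min_le_right _ _) (by linarith)⟩
  rw [hW]
  ring
end

section
/- Characterization of convex components of a POVM via the dilation: if M_i = J*P_i J is a minimal Naimark dilation and E ≥ 0 commutes with all P_i, satisfies J*EJ = 1 and E ≤ λ^{-1}·1 for some λ ∈ (0,1], then M_{i|1} := J*P_i E J is a POVM and M_i = λ·M_{i|1} + (1-λ)·Q_i where Q_i := (1-λ)^{-1}(M_i - λ M_{i|1}) is also a POVM (for λ < 1). -/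
open Matrix
open scoped ComplexOrder

lemma my_psd_smul {N : ℕ} {A : Matrix (Fin N) (Fin N) ℂ} (hA : A.PosSemidef)
    {c : ℝ} (hc : 0 ≤ c) : (c • A).PosSemidef := by
  constructor
  · show (c • A)ᴴ = c • A
    rw [Matrix.conjTranspose_smul, star_trivial, hA.1.eq]
  · intro x
    exact (hA.smul hc).2 x

/-- Characterization of convex components of a POVM via the Naimark dilation:
if `M_i = J* P_i J` and `E ≥ 0` commutes with the `P_i`, satisfies `J* E J = 𝟙`
and `E ≤ λ⁻¹·𝟙` for `0 < λ < 1`, then `M_{i|1} = J* P_i E J` is a POVM and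
`Q_i = (1-λ)⁻¹ (M_i - λ M_{i|1})` is a POVM completing the convex decomposition
`M_i = λ M_{i|1} + (1-λ) Q_i`. -/
theorem naimark_convex_component {d N n : ℕ}
    (J : Matrix (Fin N) (Fin d) ℂ) (hJ : Jᴴ * J = 1)
    (P : Fin n → Matrix (Fin N) (Fin N) ℂ)
    (hProj : ∀ i, P i * P i = P i) (hHerm : ∀ i, (P i).IsHermitian)
    (hOrth : ∀ i j, i ≠ j → P i * P j = 0) (hSum : ∑ i, P i = 1)
    (E : Matrix (Fin N) (Fin N) ℂ) (hE : E.PosSemidef)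
    (hcomm : ∀ i, E * P i = P i * E)
    (hnorm : Jᴴ * E * J = 1)
    (l : ℝ) (hl0 : 0 < l) (hl1 : l < 1)
    (hEl : (l⁻¹ • (1 : Matrix (Fin N) (Fin N) ℂ) - E).PosSemidef) :
    (∑ i, Jᴴ * (P i * E) * J = 1) ∧
    (∀ i, (Jᴴ * (P i * E) * J).PosSemidef) ∧
    (∀ i, (Jᴴ * P i * J - l • (Jᴴ * (P i * E) * J)).PosSemidef) ∧
    (∑ i, (Jᴴ * P i * J - l • (Jᴴ * (P i * E) * J))
      = (1 - l) • (1 : Matrix (Fin d) (Fin d) ℂ)) := by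
  set L : Matrix (Fin N) (Fin N) ℂ := l • E with hL
  have hPEP : ∀ i, P i * E * P i = P i * E := fun i => by
    rw [← hcomm, Matrix.mul_assoc, hProj]
  have hPLP : ∀ i, P i * L * P i = P i * L := fun i => by
    rw [hL, Matrix.mul_smul, Matrix.smul_mul, hPEP]
  have hsmul : ∀ i, l • (Jᴴ * (P i * E) * J) = Jᴴ * (P i * L) * J := fun i => by
    rw [hL, Matrix.mul_smul, Matrix.mul_smul, Matrix.smul_mul]
  have h1L : (1 : Matrix (Fin N) (Fin N) ℂ) - L = l • (l⁻¹ • (1 : Matrix (Fin N) (Fin N) ℂ) - E) := by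
    rw [smul_sub, smul_smul, mul_inv_cancel₀ (ne_of_gt hl0), one_smul]
  have hsum1 : ∑ i, Jᴴ * (P i * E) * J = 1 := by
    have : ∑ i, Jᴴ * (P i * E) * J = Jᴴ * ((∑ i, P i) * E) * J := by
      simp only [Matrix.sum_mul, Matrix.mul_sum]
    rw [this, hSum, Matrix.one_mul, hnorm]
  refine ⟨hsum1, fun i => ?_, fun i => ?_, ?_⟩
  · have : Jᴴ * (P i * E) * J = (P i * J)ᴴ * E * (P i * J) := by
      rw [Matrix.conjTranspose_mul, (hHerm i).eq, ← hPEP i]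
      simp only [Matrix.mul_assoc]
    rw [this]
    exact hE.conjTranspose_mul_mul_same _
  · have key : Jᴴ * P i * J - l • (Jᴴ * (P i * E) * J)
        = (P i * J)ᴴ * ((1 : Matrix (Fin N) (Fin N) ℂ) - L) * (P i * J) := by
      rw [hsmul, Matrix.conjTranspose_mul, (hHerm i).eq]
      have expand : Jᴴ * P i * ((1 : Matrix (Fin N) (Fin N) ℂ) - L) * (P i * J)
          = Jᴴ * (P i * ((1 : Matrix (Fin N) (Fin N) ℂ) - L) * P i) * J := by
        simp only [Matrix.mul_assoc]
      rw [expand, Matrix.mul_sub (P i), Matrix.mul_one, Matrix.sub_mul, hProj, hPLP,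
        Matrix.mul_sub Jᴴ, Matrix.sub_mul]
    rw [key, h1L]
    exact (my_psd_smul hEl (le_of_lt hl0)).conjTranspose_mul_mul_same _
  · have hsplit : ∑ i, (Jᴴ * P i * J - l • (Jᴴ * (P i * E) * J))
        = (∑ i, Jᴴ * P i * J) - l • (∑ i, Jᴴ * (P i * E) * J) := by
      rw [Finset.sum_sub_distrib, Finset.smul_sum]
    have h2 : ∑ i, Jᴴ * P i * J = Jᴴ * (∑ i, P i) * J := by
      simp only [Matrix.sum_mul, Matrix.mul_sum]
    rw [hsplit, hsum1, h2, hSum, Matrix.mul_one, hJ, sub_smul, one_smul]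
end
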